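/- Let M be a left H-module and ∇ : M → H ⊗ M a k-linear map; set ρ(m) = ∇(m) + 1⊗m. Then ∇ satisfies the connection Leibniz rule ∇(hm) = h·∇(m) + d(h)⊗_H m (with respect to the calculus 𝒦*(H)) if and only if ρ satisfies the anti-Yetter-Drinfeld compatibility ρ(hm) = h₍₁₎ m₍₋₁₎ S⁻¹(h₍₃₎) ⊗ h₍₂₎ m₍₀₎. -/
import Mathlib


/- STATEMENT 12: Let M be a left H-module and ∇ : M → H ⊗ M a k-linear map; set
ρ(m) = ∇(m) + 1⊗m. Then ∇ satisfies the connection Leibniz rule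
∇(hm) = h·∇(m) + d(h)⊗_H m (w.r.t. the calculus 𝒦*(H)) iff ρ satisfies the
anti-Yetter-Drinfeld compatibility ρ(hm) = h₍₁₎ m₍₋₁₎ S⁻¹(h₍₃₎) ⊗ h₍₂₎ m₍₀₎. -/

open TensorProduct

noncomputable section

variable (k : Type) [Field k] (H : Type) [Ring H] [HopfAlgebra k H]

def Delta2 : H →ₗ[k] (H ⊗[k] H) ⊗[k] H :=
  (TensorProduct.map Coalgebra.comul LinearMap.id) ∘ₗ Coalgebra.comul

variable {A B C : Type} [AddCommGroup A] [AddCommGroup B] [AddCommGroup C]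
  [Module k A] [Module k B] [Module k C]

def sw3 : (A ⊗[k] B) ⊗[k] C →ₗ[k] (A ⊗[k] C) ⊗[k] B :=
  (TensorProduct.assoc k A C B).symm.toLinearMap
    ∘ₗ (TensorProduct.map LinearMap.id (TensorProduct.comm k B C).toLinearMap)
    ∘ₗ (TensorProduct.assoc k A B C).toLinearMap

variable (X : Type) [AddCommGroup X] [Module k X]

def twist (Sm : H →ₗ[k] H) (act : H ⊗[k] X →ₗ[k] X) :
    H ⊗[k] (H ⊗[k] X) →ₗ[k] H ⊗[k] X :=
  (TensorProduct.map (LinearMap.mul' k H) act)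
    ∘ₗ (TensorProduct.tensorTensorTensorComm k H H H X).toLinearMap
    ∘ₗ (TensorProduct.map
          ((TensorProduct.map (LinearMap.mul' k H) LinearMap.id) ∘ₗ sw3 k)
          (TensorProduct.map Sm LinearMap.id))
    ∘ₗ (TensorProduct.tensorTensorTensorComm k (H ⊗[k] H) H H X).toLinearMap
    ∘ₗ (TensorProduct.map (Delta2 k H) LinearMap.id)

variable (Sinv : H →ₗ[k] H)

def phi2 : (H ⊗[k] H) ⊗[k] H →ₗ[k] H ⊗[k] H :=
  (TensorProduct.map (LinearMap.mul' k H) LinearMap.id)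
    ∘ₗ (TensorProduct.map (TensorProduct.map LinearMap.id Sinv) LinearMap.id)
    ∘ₗ sw3 k

/-- The degree-zero differential `d(h) = −(1⊗h) + (h₍₁₎S⁻¹(h₍₃₎) ⊗ h₍₂₎)`. -/
def d0 : H →ₗ[k] H ⊗[k] H :=
  (phi2 k H Sinv ∘ₗ Delta2 k H) - (TensorProduct.mk k H H 1)

variable [Module H X] [IsScalarTower k H X] [SMulCommClass H k X]

def actMap : H ⊗[k] X →ₗ[k] X :=
  TensorProduct.lift (LinearMap.mk₂ k (fun (h : H) (x : X) => h • x)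
    (fun h h' x => add_smul h h' x)
    (fun c h x => smul_assoc c h x)
    (fun h x y => smul_add h x y)
    (fun c h x => smul_comm h c x))

/-- The identification `𝒦¹(H) ⊗_H X ≅ H ⊗ X` applied to `ω ⊗_H x` :
`(g ⊗ g') ⊗ x ↦ g ⊗ g'x`. -/
def pairHX : (H ⊗[k] H) ⊗[k] X →ₗ[k] H ⊗[k] X :=
  (TensorProduct.map LinearMap.id (actMap k H X))
    ∘ₗ (TensorProduct.assoc k H H X).toLinearMap

def tail (Sm : H →ₗ[k] H) (act : H ⊗[k] X →ₗ[k] X) :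
    ((H ⊗[k] H) ⊗[k] H) ⊗[k] (H ⊗[k] X) →ₗ[k] H ⊗[k] X :=
  (TensorProduct.map (LinearMap.mul' k H) act)
    ∘ₗ (TensorProduct.tensorTensorTensorComm k H H H X).toLinearMap
    ∘ₗ (TensorProduct.map
          ((TensorProduct.map (LinearMap.mul' k H) LinearMap.id) ∘ₗ sw3 k)
          (TensorProduct.map Sm LinearMap.id))
    ∘ₗ (TensorProduct.tensorTensorTensorComm k (H ⊗[k] H) H H X).toLinearMap

lemma twist_eq (Sm : H →ₗ[k] H) (act : H ⊗[k] X →ₗ[k] X) :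
    twist k H X Sm act =
      tail k H X Sm act ∘ₗ (TensorProduct.map (Delta2 k H) LinearMap.id) := rfl

lemma tail_apply (Sm : H →ₗ[k] H) (a b c g : H) (x : X) :
    tail k H X Sm (actMap k H X) (((a ⊗ₜ[k] b) ⊗ₜ[k] c) ⊗ₜ[k] (g ⊗ₜ[k] x)) =
      (a * g * Sm c) ⊗ₜ[k] (b • x) := by
  simp [tail, sw3, actMap, mul_assoc]

lemma phi2_apply (a b c : H) :
    phi2 k H Sinv ((a ⊗ₜ[k] b) ⊗ₜ[k] c) = (a * Sinv c) ⊗ₜ[k] b := by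
  simp [phi2, sw3]

lemma pairHX_apply (a b : H) (x : X) :
    pairHX k H X ((a ⊗ₜ[k] b) ⊗ₜ[k] x) = a ⊗ₜ[k] (b • x) := by
  simp [pairHX, actMap]

lemma key (t : (H ⊗[k] H) ⊗[k] H) (m : X) :
    tail k H X Sinv (actMap k H X) (t ⊗ₜ[k] ((1 : H) ⊗ₜ[k] m)) =
      pairHX k H X (phi2 k H Sinv t ⊗ₜ[k] m) := by
  induction t using TensorProduct.induction_on with
  | zero => simp
  | add u v hu hv =>
      simp only [add_tmul, map_add, hu, hv]
  | tmul u c =>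
      induction u using TensorProduct.induction_on with
      | zero => simp
      | add u v hu hv =>
          simp only [add_tmul, map_add, hu, hv]
      | tmul a b =>
          rw [tail_apply, phi2_apply, pairHX_apply, mul_one]

lemma twist_one (h : H) (m : X) :
    twist k H X Sinv (actMap k H X) (h ⊗ₜ[k] ((1 : H) ⊗ₜ[k] m)) =
      pairHX k H X (phi2 k H Sinv (Delta2 k H h) ⊗ₜ[k] m) := by
  rw [twist_eq]
  simpa using key k H X Sinv (Delta2 k H h) m

theorem statement12
    (hS1 : Sinv ∘ₗ HopfAlgebra.antipode (R := k) = LinearMap.id)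
    (hS2 : HopfAlgebra.antipode (R := k) ∘ₗ Sinv = LinearMap.id)
    (nabla : X →ₗ[k] H ⊗[k] X) :
    -- the Leibniz rule for a connection:
    (∀ (h : H) (m : X),
      nabla (h • m) =
        twist k H X Sinv (actMap k H X) (h ⊗ₜ[k] nabla m)
          + pairHX k H X (d0 k H Sinv h ⊗ₜ[k] m))
    ↔
    -- `ρ(m) = ∇(m) + 1 ⊗ m` satisfies the AYD compatibility:
    (∀ (h : H) (m : X),
      (nabla + TensorProduct.mk k H X 1) (h • m) =
        twist k H X Sinv (actMap k H X)
          (h ⊗ₜ[k] (nabla + TensorProduct.mk k H X 1) m)) := by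
  have hd : ∀ (h : H) (m : X), pairHX k H X (d0 k H Sinv h ⊗ₜ[k] m)
      = pairHX k H X (phi2 k H Sinv (Delta2 k H h) ⊗ₜ[k] m)
        - (1 : H) ⊗ₜ[k] (h • m) := by
    intro h m
    simp [d0, LinearMap.sub_apply, sub_tmul, map_sub, pairHX_apply]
  constructor
  · intro hyp h m
    simp only [LinearMap.add_apply, TensorProduct.mk_apply, tmul_add, map_add,
      twist_one]
    rw [hyp h m, hd]
    abel
  · intro hyp h m
    have h1 := hyp h m
    simp only [LinearMap.add_apply, TensorProduct.mk_apply, tmul_add, map_add,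
      twist_one] at h1
    rw [hd, eq_sub_of_add_eq h1]
    abel

end
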